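/- Let 0 < p < 1 and let g : X → ℝ be convex, differentiable, and strictly positive on an open convex set X ⊆ ℝⁿ. Then f(x) = g(x)^p is invex with kernel η(x,y) = (g(y)/g(x))^(p-1)·(y - x); that is, f(y) - f(x) ≥ ⟨∇f(x), η(x,y)⟩ for all x, y ∈ X. -/

import Mathlib

open RealInnerProductSpace

/-- Gradient inequality for a convex differentiable function. -/
lemma grad_ineq_of_convexOn {n : ℕ} {X : Set (EuclideanSpace ℝ (Fin n))}
    {g : EuclideanSpace ℝ (Fin n) → ℝ} (hgconv : ConvexOn ℝ X g)
    {x y : EuclideanSpace ℝ (Fin n)} (hx : x ∈ X) (hy : y ∈ X)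
    (hg : HasFDerivAt g (InnerProductSpace.toDual ℝ _ (gradient g x)) x) :
    ⟪gradient g x, y - x⟫ ≤ g y - g x := by
  set L : ℝ →ᵃ[ℝ] EuclideanSpace ℝ (Fin n) := AffineMap.lineMap x y
  have hφconv : ConvexOn ℝ (L ⁻¹' X) (g ∘ L) := hgconv.comp_affineMap L
  have h0 : (0 : ℝ) ∈ L ⁻¹' X := by simp [L, AffineMap.lineMap_apply_zero, hx]
  have h1 : (1 : ℝ) ∈ L ⁻¹' X := by simp [L, AffineMap.lineMap_apply_one, hy]
  have hline : HasDerivAt (fun t : ℝ => L t) (y - x) 0 := by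
    have : HasDerivAt (fun t : ℝ => x + t • (y - x)) (y - x) 0 := by
      simpa using (((hasDerivAt_id (0:ℝ)).smul_const (y - x)).const_add x)
    have heq : (fun t : ℝ => L t) = fun t : ℝ => x + t • (y - x) := by
      funext t; simp [L, AffineMap.lineMap_apply_module]; module
    rw [heq]; exact this
  have hg0 : HasFDerivAt g (InnerProductSpace.toDual ℝ _ (gradient g x)) (L 0) := by
    simpa [L, AffineMap.lineMap_apply_zero] using hg
  have hφ : HasDerivAt (g ∘ L) ((InnerProductSpace.toDual ℝ _ (gradient g x)) (y - x)) 0 :=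
    hg0.comp_hasDerivAt 0 hline
  have := hφconv.le_slope_of_hasDerivAt h0 h1 one_pos hφ
  rw [InnerProductSpace.toDual_apply_apply] at hφ
  have hs : slope (g ∘ L) 0 1 = g y - g x := by
    simp [slope_def_field, L, AffineMap.lineMap_apply_zero, AffineMap.lineMap_apply_one]
  rw [hs] at this
  simpa [InnerProductSpace.toDual_apply_apply] using this

/-- Tangent line inequality for the concave function `t ↦ t^p`, `0 < p < 1`. -/
lemma rpow_tangent_le {p a b : ℝ} (hp0 : 0 < p) (hp1 : p < 1) (ha : 0 < a) (hb : 0 < b) :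
    a ^ p ≤ b ^ p + p * b ^ (p - 1) * (a - b) := by
  have hs : (-1 : ℝ) ≤ a / b - 1 := by
    have : 0 < a / b := div_pos ha hb
    linarith
  have key := rpow_one_add_le_one_add_mul_self hs hp0.le hp1.le
  rw [show (1 : ℝ) + (a / b - 1) = a / b by ring] at key
  have hbp : (0 : ℝ) < b ^ p := Real.rpow_pos_of_pos hb p
  have h2 : (a / b) ^ p * b ^ p ≤ (1 + p * (a / b - 1)) * b ^ p :=
    mul_le_mul_of_nonneg_right key hbp.le
  have h3 : (a / b) ^ p * b ^ p = a ^ p := by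
    rw [Real.div_rpow ha.le hb.le, div_mul_cancel₀]
    exact hbp.ne'
  have h4 : b ^ (p - 1) = b ^ p / b := Real.rpow_sub_one hb.ne' p
  rw [h3] at h2
  calc a ^ p ≤ (1 + p * (a / b - 1)) * b ^ p := h2
    _ = b ^ p + p * (b ^ p / b) * (a - b) := by field_simp
    _ = b ^ p + p * b ^ (p - 1) * (a - b) := by rw [h4]

/-- `f = g^p` with `0 < p < 1` and `g` convex positive is invex with kernel
`η(x,y) = (g(y)/g(x))^(p-1)·(y-x)`. -/
theorem invex_rpow_of_convex {n : ℕ} (p : ℝ) (hp0 : 0 < p) (hp1 : p < 1)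
    (X : Set (EuclideanSpace ℝ (Fin n))) (hX : IsOpen X) (hXc : Convex ℝ X) (hXne : X.Nonempty)
    (g : EuclideanSpace ℝ (Fin n) → ℝ)
    (hgconv : ConvexOn ℝ X g) (hgdiff : ∀ x ∈ X, DifferentiableAt ℝ g x)
    (hgpos : ∀ x ∈ X, 0 < g x) :
    ∀ x ∈ X, ∀ y ∈ X,
      g y ^ p - g x ^ p ≥
        ⟪gradient (fun z => g z ^ p) x, ((g y / g x) ^ (p - 1)) • (y - x)⟫ := by
  intro x hx y hy
  have ha : 0 < g x := hgpos x hx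
  have hb : 0 < g y := hgpos y hy
  have hg : HasFDerivAt g (InnerProductSpace.toDual ℝ _ (gradient g x)) x :=
    (hgdiff x hx).hasGradientAt.hasFDerivAt
  -- gradient of f = g^p
  have hr : HasDerivAt (fun t : ℝ => t ^ p) (p * g x ^ (p - 1)) (g x) :=
    Real.hasDerivAt_rpow_const (Or.inl ha.ne')
  have hcomp : HasFDerivAt (fun z => g z ^ p)
      ((p * g x ^ (p - 1)) • InnerProductSpace.toDual ℝ _ (gradient g x)) x :=
    hr.comp_hasFDerivAt x hg
  have hgradf : gradient (fun z => g z ^ p) x = (p * g x ^ (p - 1)) • gradient g x := by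
    have := hcomp.hasGradientAt.gradient
    rw [this, map_smul, LinearIsometryEquiv.symm_apply_apply]
  rw [hgradf]
  rw [real_inner_smul_left, real_inner_smul_right]
  -- gradient inequality
  have hgi : ⟪gradient g x, y - x⟫ ≤ g y - g x := grad_ineq_of_convexOn hgconv hx hy hg
  -- coefficient simplification
  have hcoef : g x ^ (p - 1) * (g y / g x) ^ (p - 1) = g y ^ (p - 1) := by
    rw [Real.div_rpow hb.le ha.le, mul_div_cancel₀]
    exact (Real.rpow_pos_of_pos ha _).ne'
  have hpos : 0 < p * g y ^ (p - 1) := mul_pos hp0 (Real.rpow_pos_of_pos hb _)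
  have h1 : p * g x ^ (p - 1) * ((g y / g x) ^ (p - 1) * ⟪gradient g x, y - x⟫)
      = (p * g y ^ (p - 1)) * ⟪gradient g x, y - x⟫ := by
    rw [← hcoef]; ring
  rw [h1]
  have h2 : (p * g y ^ (p - 1)) * ⟪gradient g x, y - x⟫ ≤ p * g y ^ (p - 1) * (g y - g x) :=
    mul_le_mul_of_nonneg_left hgi hpos.le
  have h3 : g x ^ p ≤ g y ^ p + p * g y ^ (p - 1) * (g x - g y) :=
    rpow_tangent_le hp0 hp1 ha hb
  have : p * g y ^ (p - 1) * (g y - g x) ≤ g y ^ p - g x ^ p := by linarith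
  linarith
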